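/- Let K be a field of characteristic 0, U a nonempty finite subset of ℤ, and V, V' ∈ C(U,2d) with 2d ≤ k. For matchings M ∈ M(V,d) and M' ∈ M(V',d), the iterated partial derivative ∂^M ∂^{M'} Φ_{U,k} equals Φ_{U∖(V∪V'), k−2d} if V ∩ V' = ∅, and equals 0 if V ∩ V' ≠ ∅. -/

import Mathlib

open MvPolynomial Finset

noncomputable section

/-- The set of matchings with exactly `k` edges of the complete graph on vertex set `V ⊆ ℤ`:
sets of `k` pairwise disjoint 2-element subsets of `V`. -/
def matchings (V : Finset ℤ) (k : ℕ) : Finset (Finset (Finset ℤ)) :=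
  (V.powersetCard 2).powerset.filter fun M =>
    M.card = k ∧ ∀ e ∈ M, ∀ f ∈ M, e ≠ f → Disjoint e f

/-- `S` is a matching of the complete graph on vertex set `V`. -/
def IsMatching (V : Finset ℤ) (S : Finset (Finset ℤ)) : Prop :=
  S ⊆ V.powersetCard 2 ∧ ∀ e ∈ S, ∀ f ∈ S, e ≠ f → Disjoint e f

/-- The weighted generating function `Φ_{V,k} = Σ_{M ∈ M(V,k)} x^M` of `k`-edge matchings,
an element of the polynomial ring with variables indexed by (potential) edges. -/
def Phi (K : Type*) [Field K] (V : Finset ℤ) (k : ℕ) : MvPolynomial (Finset ℤ) K :=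
  ∑ M ∈ matchings V k, ∏ e ∈ M, X e

/-- The differential operator `∂^S = Π_{i ∈ S} ∂/∂x_i` applied to `p`. -/
def dset {K : Type*} [CommSemiring K] {ι : Type*} [DecidableEq ι]
    (S : Finset ι) (p : MvPolynomial ι K) : MvPolynomial ι K :=
  S.toList.foldr (fun i q => pderiv i q) p

/-- The differential operator `∂^m = Π_i (∂/∂x_i)^{m i}` of a monomial exponent `m`. -/
def dmon {K : Type*} [CommSemiring K] {ι : Type*} [DecidableEq ι]
    (m : ι →₀ ℕ) (p : MvPolynomial ι K) : MvPolynomial ι K :=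
  m.support.toList.foldr (fun i q => (⇑(pderiv (R := K) i))^[m i] q) p

/-- The linear map `f ↦ f(∂)Φ`, where `f(∂)` is obtained from `f` by substituting
`∂/∂x_i` for `x_i`. -/
def diffOp (K : Type*) [Field K] {ι : Type*} [DecidableEq ι]
    (Φ : MvPolynomial ι K) : MvPolynomial ι K →ₗ[K] MvPolynomial ι K :=
  (basisMonomials ι K).constr K fun m => dmon m Φ

/-- The annihilator `Ann(Φ) = {f : f(∂)Φ = 0}`. -/
def Ann (K : Type*) [Field K] {ι : Type*} [DecidableEq ι]
    (Φ : MvPolynomial ι K) : Submodule K (MvPolynomial ι K) :=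
  LinearMap.ker (diffOp K Φ)

/-- The canonical matching `M(V) = {{v₁,v₂},{v₃,v₄},…}` on `V = {v₁ < v₂ < ⋯}`. -/
def canonMatching (V : Finset ℤ) : Finset (Finset ℤ) :=
  (Finset.range (V.card / 2)).image fun i =>
    ({(V.sort (· ≤ ·)).getD (2 * i) 0, (V.sort (· ≤ ·)).getD (2 * i + 1) 0} : Finset ℤ)

/-- The `n`-th elementary symmetric polynomial in the variables indexed by `U`. -/
def elemSymm (K : Type*) [Field K] {ι : Type*} (U : Finset ι) (n : ℕ) : MvPolynomial ι K :=
  ∑ S ∈ U.powersetCard n, ∏ i ∈ S, X i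

end

section Aux
set_option linter.unusedSectionVars false
variable {K : Type*} [CommSemiring K] {ι : Type*} [DecidableEq ι]

/-- indicator finsupp of a finset -/
noncomputable def indF (N : Finset ι) : ι →₀ ℕ := ∑ e ∈ N, Finsupp.single e 1

lemma indF_apply (N : Finset ι) (a : ι) : indF N a = if a ∈ N then 1 else 0 := by
  classical
  induction N using Finset.cons_induction with
  | empty => simp [indF]
  | cons b N hb ih =>
    simp only [indF, Finset.sum_cons, Finsupp.add_apply] at *
    rw [ih]
    rcases eq_or_ne a b with rfl | hab
    · simp [hb]
    · simp [Finsupp.single_apply, hab.symm, Finset.mem_cons, hab]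

lemma prod_X_eq (N : Finset ι) : (∏ e ∈ N, (X e : MvPolynomial ι K)) = monomial (indF N) 1 := by
  induction N using Finset.cons_induction with
  | empty => simp [indF]
  | cons b N hb ih =>
    rw [Finset.prod_cons, ih]
    have : indF (cons b N hb) = Finsupp.single b 1 + indF N := by
      simp [indF, Finset.sum_cons]
      rw [Finset.sum_insert hb]
    rw [this, X, monomial_mul, one_mul]

lemma indF_erase (N : Finset ι) (a : ι) (ha : a ∈ N) :
    indF N - Finsupp.single a 1 = indF (N.erase a) := by
  ext i
  rcases eq_or_ne i a with rfl | h
  · simp [Finsupp.single_apply, indF_apply, ha]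
  · simp [Finsupp.single_apply, indF_apply, h, h.symm, Finset.mem_erase]

lemma pderiv_prod_X (N : Finset ι) (a : ι) :
    pderiv a (∏ e ∈ N, (X e : MvPolynomial ι K)) =
      if a ∈ N then ∏ e ∈ N.erase a, (X e : MvPolynomial ι K) else 0 := by
  rw [prod_X_eq, pderiv_monomial]
  by_cases ha : a ∈ N
  · rw [if_pos ha, prod_X_eq, ← indF_erase N a ha]
    simp [indF_apply, ha]
  · simp [indF_apply, ha]

lemma foldr_pderiv_prod_X (l : List ι) (hl : l.Nodup) (N : Finset ι) :
    l.foldr (fun i q => pderiv i q) (∏ e ∈ N, (X e : MvPolynomial ι K)) =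
      if l.toFinset ⊆ N then ∏ e ∈ N \ l.toFinset, (X e : MvPolynomial ι K) else 0 := by
  induction l with
  | nil => simp
  | cons a l ih =>
    rw [List.nodup_cons] at hl
    rw [List.foldr_cons, ih hl.2]
    by_cases h : l.toFinset ⊆ N
    · rw [if_pos h, pderiv_prod_X]
      have hmem : a ∈ N \ l.toFinset ↔ a ∈ N := by
        simp only [Finset.mem_sdiff, List.mem_toFinset, and_iff_left_iff_imp]
        exact fun _ => hl.1
      by_cases ha : a ∈ N
      · rw [if_pos (hmem.mpr ha), if_pos (by simp [List.toFinset_cons, Finset.insert_subset_iff, ha, h]),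
          ]
        congr 1
        ext x
        simp only [Finset.mem_erase, Finset.mem_sdiff, List.toFinset_cons, Finset.mem_insert,
          List.mem_toFinset]
        tauto
      · rw [if_neg (fun hc => ha (hmem.mp hc)), if_neg (by
          simp [List.toFinset_cons, Finset.insert_subset_iff, ha])]
    · rw [if_neg h, map_zero, if_neg (by
        simp only [List.toFinset_cons, Finset.insert_subset_iff]; tauto)]

lemma foldr_pderiv_sum {α : Type*} (l : List ι) (T : Finset α) (f : α → MvPolynomial ι K) :
    l.foldr (fun i q => pderiv i q) (∑ n ∈ T, f n) =
      ∑ n ∈ T, l.foldr (fun i q => pderiv i q) (f n) := by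
  induction l with
  | nil => simp
  | cons a l ih => rw [List.foldr_cons, ih, map_sum]; rfl

lemma dset_prod_X (S N : Finset ι) :
    dset S (∏ e ∈ N, (X e : MvPolynomial ι K)) =
      if S ⊆ N then ∏ e ∈ N \ S, (X e : MvPolynomial ι K) else 0 := by
  rw [dset, foldr_pderiv_prod_X _ S.nodup_toList, Finset.toList_toFinset]

lemma dset_sum {α : Type*} (S : Finset ι) (T : Finset α) (f : α → MvPolynomial ι K) :
    dset S (∑ n ∈ T, f n) = ∑ n ∈ T, dset S (f n) :=
  foldr_pderiv_sum _ T f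

lemma dset_zero (S : Finset ι) : dset S (0 : MvPolynomial ι K) = 0 := by
  have := dset_sum S (∅ : Finset ℕ) (fun _ => (0 : MvPolynomial ι K))
  simpa using this

lemma mem_matchings {V : Finset ℤ} {k : ℕ} {M : Finset (Finset ℤ)} :
    M ∈ matchings V k ↔ M ⊆ V.powersetCard 2 ∧ M.card = k ∧
      ∀ e ∈ M, ∀ f ∈ M, e ≠ f → Disjoint e f := by
  simp [matchings, Finset.mem_filter, Finset.mem_powerset, and_assoc]

lemma matching_cover {V : Finset ℤ} {d : ℕ} {M : Finset (Finset ℤ)}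
    (hM : M ∈ matchings V d) (hV : V.card = 2 * d) {v : ℤ} (hv : v ∈ V) :
    ∃ e ∈ M, v ∈ e := by
  rw [mem_matchings] at hM
  obtain ⟨hsub, hcard, hdisj⟩ := hM
  have hsub2 : M.biUnion id ⊆ V := by
    intro x hx
    obtain ⟨e, he, hxe⟩ := Finset.mem_biUnion.mp hx
    exact (Finset.mem_powersetCard.mp (hsub he)).1 hxe
  have hc : (M.biUnion id).card = 2 * d := by
    have h1 := Finset.card_biUnion (s := M) (t := id) hdisj
    have : ∀ e ∈ M, (id e : Finset ℤ).card = 2 := fun e he =>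
      (Finset.mem_powersetCard.mp (hsub he)).2
    rw [h1, Finset.sum_congr rfl this, Finset.sum_const, hcard, smul_eq_mul, Nat.mul_comm]
  have heq := Finset.eq_of_subset_of_card_le hsub2 (by rw [hc, hV])
  rw [← heq] at hv
  exact Finset.mem_biUnion.mp hv
end Aux

/-- for `V, V' ∈ C(U,2d)` with `2d ≤ k`, matchings `M ∈ M(V,d)`,
`M' ∈ M(V',d)`: `∂^M ∂^{M'} Φ_{U,k} = Φ_{U∖(V∪V'), k−2d}` if `V ∩ V' = ∅`, and `= 0`
otherwise. -/
theorem dset_dset_Phi {K : Type*} [Field K] [CharZero K]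
    (U V V' : Finset ℤ) (hU : U.Nonempty) (d k : ℕ) (hdk : 2 * d ≤ k)
    (hV : V ∈ U.powersetCard (2 * d)) (hV' : V' ∈ U.powersetCard (2 * d))
    (M M' : Finset (Finset ℤ)) (hM : M ∈ matchings V d) (hM' : M' ∈ matchings V' d) :
    (V ∩ V' = ∅ → dset M (dset M' (Phi K U k)) = Phi K (U \ (V ∪ V')) (k - 2 * d)) ∧
    (V ∩ V' ≠ ∅ → dset M (dset M' (Phi K U k)) = 0) := by
  classical
  obtain ⟨hVU, hVcard⟩ := Finset.mem_powersetCard.mp hV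
  obtain ⟨hV'U, hV'card⟩ := Finset.mem_powersetCard.mp hV'
  obtain ⟨hMsub, hMcard, hMdisj⟩ := mem_matchings.mp hM
  obtain ⟨hM'sub, hM'card, hM'disj⟩ := mem_matchings.mp hM'
  have hMe : ∀ e ∈ M, e ⊆ V ∧ e.card = 2 := fun e he =>
    Finset.mem_powersetCard.mp (hMsub he)
  have hM'e : ∀ e ∈ M', e ⊆ V' ∧ e.card = 2 := fun e he =>
    Finset.mem_powersetCard.mp (hM'sub he)
  have key : dset M (dset M' (Phi K U k)) =
      ∑ N ∈ matchings U k, if M' ⊆ N ∧ M ⊆ N \ M' then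
        ∏ e ∈ ((N \ M') \ M), (X e : MvPolynomial (Finset ℤ) K) else 0 := by
    rw [Phi, dset_sum, dset_sum]
    refine Finset.sum_congr rfl fun N _ => ?_
    rw [dset_prod_X]
    by_cases h1 : M' ⊆ N
    · rw [if_pos h1, dset_prod_X]
      by_cases h2 : M ⊆ N \ M'
      · rw [if_pos h2, if_pos ⟨h1, h2⟩]
      · rw [if_neg h2, if_neg (fun h => h2 h.2)]
    · rw [if_neg h1, dset_zero, if_neg (fun h => h1 h.1)]
  constructor
  · -- disjoint case
    intro hVV'
    have hdVV' : Disjoint V V' := Finset.disjoint_iff_inter_eq_empty.mpr hVV'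
    have hdMM' : Disjoint M M' := by
      rw [Finset.disjoint_left]
      intro e heM heM'
      have h1 := (hMe e heM).1
      have h2 := (hM'e e heM').1
      have hne : e.Nonempty := Finset.card_pos.mp (by rw [(hMe e heM).2]; norm_num)
      obtain ⟨x, hx⟩ := hne
      exact Finset.disjoint_left.mp hdVV' (h1 hx) (h2 hx)
    set W := M ∪ M' with hW
    have hWcard : W.card = 2 * d := by
      rw [hW, Finset.card_union_of_disjoint hdMM', hMcard, hM'card]; omega
    have cover : ∀ v ∈ V ∪ V', ∃ e ∈ W, v ∈ e := by
      intro v hv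
      rcases Finset.mem_union.mp hv with h | h
      · obtain ⟨e, he, hve⟩ := matching_cover hM hVcard h
        exact ⟨e, Finset.mem_union_left _ he, hve⟩
      · obtain ⟨e, he, hve⟩ := matching_cover hM' hV'card h
        exact ⟨e, Finset.mem_union_right _ he, hve⟩
    have hWe : ∀ e ∈ W, e ⊆ V ∪ V' ∧ e.card = 2 := by
      intro e he
      rcases Finset.mem_union.mp he with h | h
      · exact ⟨(hMe e h).1.trans Finset.subset_union_left, (hMe e h).2⟩
      · exact ⟨(hM'e e h).1.trans Finset.subset_union_right, (hM'e e h).2⟩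
    have hWdisj : ∀ e ∈ W, ∀ f ∈ W, e ≠ f → Disjoint e f := by
      intro e he f hf hef
      rcases Finset.mem_union.mp he with h | h <;> rcases Finset.mem_union.mp hf with h' | h'
      · exact hMdisj e h f h' hef
      · exact Finset.disjoint_of_subset_left (hMe e h).1
          (Finset.disjoint_of_subset_right (hM'e f h').1 hdVV')
      · exact Finset.disjoint_of_subset_left (hM'e e h).1
          (Finset.disjoint_of_subset_right (hMe f h').1 hdVV'.symm)
      · exact hM'disj e h f h' hef
    rw [key]
    have step : ∀ N ∈ matchings U k,
        (if M' ⊆ N ∧ M ⊆ N \ M' then ∏ e ∈ ((N \ M') \ M), (X e : MvPolynomial (Finset ℤ) K) else 0)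
        = if W ⊆ N then ∏ e ∈ (N \ W), (X e : MvPolynomial (Finset ℤ) K) else 0 := by
      intro N _
      have hcond : (M' ⊆ N ∧ M ⊆ N \ M') ↔ W ⊆ N := by
        rw [Finset.subset_sdiff, hW, Finset.union_subset_iff]
        constructor
        · rintro ⟨h1, h2, _⟩; exact ⟨h2, h1⟩
        · rintro ⟨h1, h2⟩; exact ⟨h2, h1, hdMM'⟩
      have hsd : (N \ M') \ M = N \ W := by
        ext x
        simp only [Finset.mem_sdiff, hW, Finset.mem_union]
        tauto
      by_cases h : W ⊆ N
      · rw [if_pos (hcond.mpr h), if_pos h, hsd]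
      · rw [if_neg (fun hc => h (hcond.mp hc)), if_neg h]
    rw [Finset.sum_congr rfl step, ← Finset.sum_filter]
    rw [Phi]
    refine Finset.sum_bij' (fun N _ => N \ W) (fun N₀ _ => N₀ ∪ W) ?_ ?_ ?_ ?_ ?_
    · -- hi
      intro N hN
      rw [Finset.mem_filter] at hN
      obtain ⟨hNm, hWN⟩ := hN
      obtain ⟨hNsub, hNcard, hNdisj⟩ := mem_matchings.mp hNm
      rw [mem_matchings]
      refine ⟨?_, ?_, ?_⟩
      · intro e he
        rw [Finset.mem_sdiff] at he
        obtain ⟨heN, heW⟩ := he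
        obtain ⟨heU, hec⟩ := Finset.mem_powersetCard.mp (hNsub heN)
        rw [Finset.mem_powersetCard]
        refine ⟨?_, hec⟩
        intro x hx
        rw [Finset.mem_sdiff]
        refine ⟨heU hx, ?_⟩
        intro hxVV'
        obtain ⟨f, hfW, hxf⟩ := cover x hxVV'
        have hfN : f ∈ N := hWN hfW
        have hef : e ≠ f := fun h => heW (h ▸ hfW)
        exact Finset.disjoint_left.mp (hNdisj e heN f hfN hef) hx hxf
      · rw [Finset.card_sdiff_of_subset hWN, hNcard, hWcard]
      · intro e he f hf hef
        rw [Finset.mem_sdiff] at he hf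
        exact hNdisj e he.1 f hf.1 hef
    · -- hj
      intro N₀ hN₀
      obtain ⟨hN₀sub, hN₀card, hN₀disj⟩ := mem_matchings.mp hN₀
      have hN₀e : ∀ e ∈ N₀, e ⊆ U \ (V ∪ V') ∧ e.card = 2 := fun e he =>
        Finset.mem_powersetCard.mp (hN₀sub he)
      have hdN₀W : Disjoint N₀ W := by
        rw [Finset.disjoint_left]
        intro e he heW
        have h1 := (hN₀e e he).1
        have h2 := (hWe e heW).1
        obtain ⟨x, hx⟩ : e.Nonempty := Finset.card_pos.mp (by rw [(hN₀e e he).2]; norm_num)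
        exact (Finset.mem_sdiff.mp (h1 hx)).2 (h2 hx)
      rw [Finset.mem_filter, mem_matchings]
      refine ⟨⟨?_, ?_, ?_⟩, Finset.subset_union_right⟩
      · intro e he
        rcases Finset.mem_union.mp he with h | h
        · exact Finset.powersetCard_mono (Finset.sdiff_subset) (hN₀sub h)
        · rw [Finset.mem_powersetCard]
          exact ⟨((hWe e h).1).trans (Finset.union_subset hVU hV'U), (hWe e h).2⟩
      · rw [Finset.card_union_of_disjoint hdN₀W, hN₀card, hWcard]; omega
      · intro e he f hf hef
        rcases Finset.mem_union.mp he with h | h <;> rcases Finset.mem_union.mp hf with h' | h'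
        · exact hN₀disj e h f h' hef
        · refine Finset.disjoint_left.mpr fun x hx hxf => ?_
          exact (Finset.mem_sdiff.mp ((hN₀e e h).1 hx)).2 ((hWe f h').1 hxf)
        · refine Finset.disjoint_left.mpr fun x hx hxf => ?_
          exact (Finset.mem_sdiff.mp ((hN₀e f h').1 hxf)).2 ((hWe e h).1 hx)
        · exact hWdisj e h f h' hef
    · intro N hN
      rw [Finset.mem_filter] at hN
      exact Finset.sdiff_union_of_subset hN.2
    · intro N₀ hN₀
      obtain ⟨hN₀sub, hN₀card, hN₀disj⟩ := mem_matchings.mp hN₀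
      have hN₀e : ∀ e ∈ N₀, e ⊆ U \ (V ∪ V') ∧ e.card = 2 := fun e he =>
        Finset.mem_powersetCard.mp (hN₀sub he)
      have hdN₀W : Disjoint N₀ W := by
        rw [Finset.disjoint_left]
        intro e he heW
        have h1 := (hN₀e e he).1
        have h2 := (hWe e heW).1
        obtain ⟨x, hx⟩ : e.Nonempty := Finset.card_pos.mp (by rw [(hN₀e e he).2]; norm_num)
        exact (Finset.mem_sdiff.mp (h1 hx)).2 (h2 hx)
      exact Finset.union_sdiff_cancel_right hdN₀W
    · intro N hN
      rfl
  · -- intersecting case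
    intro hne
    obtain ⟨v, hv⟩ := Finset.nonempty_iff_ne_empty.mpr hne
    rw [Finset.mem_inter] at hv
    rw [key]
    refine Finset.sum_eq_zero fun N hN => ?_
    rw [if_neg]
    rintro ⟨h1, h2⟩
    rw [Finset.subset_sdiff] at h2
    obtain ⟨hMN, hdMM'⟩ := h2
    obtain ⟨e, heM, hve⟩ := matching_cover hM hVcard hv.1
    obtain ⟨f, hfM', hvf⟩ := matching_cover hM' hV'card hv.2
    obtain ⟨_, _, hNdisj⟩ := mem_matchings.mp hN
    have hef : e ≠ f := by
      rintro rfl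
      exact Finset.disjoint_left.mp hdMM' heM hfM'
    exact Finset.disjoint_left.mp (hNdisj e (hMN heM) f (h1 hfM') hef) hve hvf
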